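/- Fix p ∈ (0, 1/2), α ∈ (0, 1), and δ > 0. There exists k₀ such that for every integer k ≥ k₀, every n, every injective encoding φ : F₂ᵏ → F₂ⁿ with update-efficiency t satisfying t ≤ (1−α)·log₂ k / log₂((1−p)/p), and every decoder ψ : F₂ⁿ → F₂ᵏ, the average error probability 2^{−k}·Σ_{x ∈ F₂ᵏ} Pr(ψ(φ(x) + e) ≠ x) over BSC(p) is at least 1 − δ. -/

import Mathlib

/-- Probability that BSC(p) produces the noise vector `e` (i.i.d. coordinates). -/
noncomputable def bscProb (p : ℝ) {n : ℕ} (e : Fin n → ZMod 2) : ℝ :=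
  p ^ hammingNorm e * (1 - p) ^ (n - hammingNorm e)

noncomputable def bW (p : ℝ) (a : ZMod 2) : ℝ := if a = 0 then 1 - p else p

lemma bscProb_eq_prod {n : ℕ} (p : ℝ) (e : Fin n → ZMod 2) :
    bscProb p e = ∏ i, bW p (e i) := by
  unfold bscProb bW
  rw [← Finset.prod_filter_mul_prod_filter_not Finset.univ (fun i => e i = 0)]
  have h1 : (Finset.univ.filter fun i => ¬ e i = 0).card = hammingNorm e := by
    simp [hammingNorm]
  have h2 : (Finset.univ.filter fun i => e i = 0).card = n - hammingNorm e := by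
    have := Finset.card_filter_add_card_filter_not (s := (Finset.univ : Finset (Fin n)))
      (p := fun i => e i = 0)
    simp only [Finset.card_univ, Fintype.card_fin] at this
    omega
  have hA : (∏ x ∈ Finset.univ.filter (fun x => e x = 0), (if e x = 0 then (1-p) else p))
      = (1-p) ^ (n - hammingNorm e) := by
    rw [Finset.prod_congr rfl (fun x hx => if_pos (Finset.mem_filter.mp hx).2),
      Finset.prod_const, h2]
  have hB : (∏ x ∈ Finset.univ.filter (fun x => ¬ e x = 0), (if e x = 0 then (1-p) else p))
      = p ^ hammingNorm e := by
    rw [Finset.prod_congr rfl (fun x hx => if_neg (Finset.mem_filter.mp hx).2),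
      Finset.prod_const, h1]
  rw [hA, hB, mul_comm]

lemma sum_bW (p : ℝ) : ∑ a : ZMod 2, bW p a = 1 := by
  rw [show (Finset.univ : Finset (ZMod 2)) = {0, 1} from rfl]
  rw [Finset.sum_pair (by decide)]
  simp [bW]

lemma sum_bscProb {n : ℕ} (p : ℝ) : ∑ e : Fin n → ZMod 2, bscProb p e = 1 := by
  simp_rw [bscProb_eq_prod]
  rw [← Fintype.piFinset_univ, Finset.sum_prod_piFinset]
  simp [sum_bW]

lemma bscProb_nonneg {n : ℕ} {p : ℝ} (hp0 : 0 ≤ p) (hp1 : p ≤ 1) (e : Fin n → ZMod 2) :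
    0 ≤ bscProb p e :=
  mul_nonneg (pow_nonneg hp0 _) (pow_nonneg (by linarith) _)

lemma bW_ratio {p : ℝ} (hp0 : 0 < p) (hp1 : p < 1/2) (a b : ZMod 2) :
    (if a = b then (1:ℝ) else p/(1-p)) * bW p a ≤ bW p b := by
  have hq : (0:ℝ) < 1 - p := by linarith
  have hab : ∀ c : ZMod 2, c = 0 ∨ c = 1 := by decide
  rcases hab a with ha | ha <;> rcases hab b with hb | hb <;>
    subst ha <;> subst hb <;> simp [bW] <;> rw [div_mul_eq_mul_div, div_le_iff₀ hq] <;> nlinarith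

lemma bscProb_ratio {n : ℕ} {p : ℝ} (hp0 : 0 < p) (hp1 : p < 1/2)
    (u v : Fin n → ZMod 2) (t : ℕ) (hd : hammingDist u v ≤ t) :
    (p/(1-p))^t * bscProb p u ≤ bscProb p v := by
  have hq : (0:ℝ) < 1 - p := by linarith
  have hγ0 : (0:ℝ) ≤ p/(1-p) := le_of_lt (div_pos hp0 hq)
  have hγ1 : p/(1-p) ≤ 1 := by rw [div_le_one hq]; linarith
  have step1 : (p/(1-p))^t * bscProb p u ≤ (p/(1-p))^(hammingDist u v) * bscProb p u :=
    mul_le_mul_of_nonneg_right (pow_le_pow_of_le_one hγ0 hγ1 hd)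
      (bscProb_nonneg hp0.le (by linarith) u)
  refine step1.trans ?_
  rw [bscProb_eq_prod, bscProb_eq_prod]
  have hc : (p/(1-p))^(hammingDist u v) = ∏ i, (if u i = v i then (1:ℝ) else p/(1-p)) := by
    rw [← Finset.prod_filter_mul_prod_filter_not Finset.univ (fun i => u i = v i)]
    rw [Finset.prod_congr rfl (fun x hx => if_pos (Finset.mem_filter.mp hx).2),
      Finset.prod_congr rfl (fun x hx => if_neg (Finset.mem_filter.mp hx).2),
      Finset.prod_const, Finset.prod_const, one_pow, one_mul]
    congr 1
  rw [hc, ← Finset.prod_mul_distrib]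
  apply Finset.prod_le_prod
  · intro i _
    exact mul_nonneg (by split <;> simp [hγ0]) (by simp [bW]; split <;> linarith)
  · intro i _
    exact bW_ratio hp0 hp1 (u i) (v i)

def uvec {k : ℕ} (i : Fin k) : Fin k → ZMod 2 := fun j => if j = i then 1 else 0

lemma hammingNorm_uvec {k : ℕ} (i : Fin k) : hammingNorm (uvec i) = 1 := by
  unfold hammingNorm uvec
  convert Finset.card_singleton i
  ext j
  simp

lemma uvec_inj {k : ℕ} : Function.Injective (uvec (k := k)) := by
  intro i j h
  have := congrFun h i
  simp [uvec] at this
  by_contra hne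
  exact hne this

lemma uvec_ne_zero {k : ℕ} (i : Fin k) : uvec i ≠ 0 := by
  intro h
  have h2 : (1 : ZMod 2) = 0 := by
    have := congrFun h i
    rwa [show uvec i i = 1 by simp [uvec], show (0 : Fin k → ZMod 2) i = 0 from rfl] at this
  exact absurd h2 (by decide)

lemma sum_bscProb_shift {n : ℕ} (p : ℝ) (c : Fin n → ZMod 2) :
    ∑ y : Fin n → ZMod 2, bscProb p (y - c) = 1 := by
  rw [← sum_bscProb (n := n) (p := p)]
  exact Fintype.sum_bijective (fun y => y - c) (Function.bijective_iff_has_inverse.mpr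
    ⟨fun y => y + c, fun y => by simp, fun y => by simp⟩) _ _ (fun y => rfl)

lemma key {p : ℝ} (hp0 : 0 < p) (hp1 : p < 1/2) {k n t : ℕ}
    (φ : (Fin k → ZMod 2) → (Fin n → ZMod 2))
    (hupd : ∀ x e, hammingNorm e = 1 → hammingNorm (φ (x + e) - φ x) ≤ t)
    (ψ : (Fin n → ZMod 2) → (Fin k → ZMod 2)) (x : Fin k → ZMod 2) :
    (∑ y : Fin n → ZMod 2, bscProb p (y - φ x) * (if ψ y = x then 1 else 0)) +
      (p/(1-p))^t * ∑ i : Fin k, ∑ y : Fin n → ZMod 2,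
        bscProb p (y - φ (x + uvec i)) * (if ψ y = x + uvec i then 1 else 0) ≤ 1 := by
  have hq : (0:ℝ) < 1 - p := by linarith
  have stepA : (p/(1-p))^t * ∑ i : Fin k, ∑ y : Fin n → ZMod 2,
      bscProb p (y - φ (x + uvec i)) * (if ψ y = x + uvec i then 1 else 0)
      ≤ ∑ i : Fin k, ∑ y : Fin n → ZMod 2,
        bscProb p (y - φ x) * (if ψ y = x + uvec i then 1 else 0) := by
    rw [Finset.mul_sum]
    apply Finset.sum_le_sum
    intro i _
    rw [Finset.mul_sum]
    apply Finset.sum_le_sum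
    intro y _
    rw [← mul_assoc]
    apply mul_le_mul_of_nonneg_right _ (by positivity)
    apply bscProb_ratio hp0 hp1
    rw [hammingDist_eq_hammingNorm]
    rw [show -(y - φ (x + uvec i)) + (y - φ x) = φ (x + uvec i) - φ x by abel]
    exact hupd x (uvec i) (hammingNorm_uvec i)
  have stepB : (∑ y : Fin n → ZMod 2, bscProb p (y - φ x) * (if ψ y = x then 1 else 0)) +
      (∑ i : Fin k, ∑ y : Fin n → ZMod 2,
        bscProb p (y - φ x) * (if ψ y = x + uvec i then 1 else 0)) ≤ 1 := by
    rw [Finset.sum_comm, ← Finset.sum_add_distrib]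
    calc ∑ y : Fin n → ZMod 2, (bscProb p (y - φ x) * (if ψ y = x then 1 else 0) +
            ∑ i : Fin k, bscProb p (y - φ x) * (if ψ y = x + uvec i then 1 else 0))
        = ∑ y : Fin n → ZMod 2, bscProb p (y - φ x) *
            ((if ψ y = x then 1 else 0) + ∑ i : Fin k, (if ψ y = x + uvec i then 1 else 0)) := by
          apply Finset.sum_congr rfl
          intro y _
          rw [mul_add, Finset.mul_sum]
      _ ≤ ∑ y : Fin n → ZMod 2, bscProb p (y - φ x) * 1 := by
          apply Finset.sum_le_sum
          intro y _
          apply mul_le_mul_of_nonneg_left _ (bscProb_nonneg hp0.le (by linarith) _)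
          by_cases h : ψ y = x
          · have hz : ∑ i : Fin k, (if ψ y = x + uvec i then (1:ℝ) else 0) = 0 := by
              apply Finset.sum_eq_zero
              intro i _
              rw [if_neg]
              intro hc
              exact uvec_ne_zero i (by rw [h] at hc; simpa using hc.symm)
            rw [if_pos h, hz]; norm_num
          · rw [if_neg h, zero_add]
            have hrw : ∀ i : Fin k, (ψ y = x + uvec i) ↔ (uvec i = ψ y - x) := by
              intro i
              constructor
              · intro hh; rw [hh]; abel
              · intro hh; rw [hh]; abel
            simp_rw [hrw]
            rw [Finset.sum_boole]
            have hcard : (Finset.univ.filter fun i : Fin k => uvec i = ψ y - x).card ≤ 1 := by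
              apply Finset.card_le_one.mpr
              intro a ha b hb
              apply uvec_inj
              rw [(Finset.mem_filter.mp ha).2, (Finset.mem_filter.mp hb).2]
            exact_mod_cast hcard
      _ = 1 := by simp_rw [mul_one]; exact sum_bscProb_shift p (φ x)
  linarith [stepA, stepB]


open Finset in
/-- fix `p ∈ (0,1/2)`, `α ∈ (0,1)` and `δ > 0`.  For all large enough `k`,
any (possibly nonlinear) injective encoding `φ : F₂ᵏ → F₂ⁿ` with update-efficiency
`t ≤ (1−α) log₂ k / log₂((1−p)/p)` has average error probability at least `1 − δ` over
BSC(p), for every decoder. -/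
theorem stmt_11 (p α δ : ℝ) (hp0 : 0 < p) (hp1 : p < 1 / 2) (hα0 : 0 < α) (hα1 : α < 1)
    (hδ : 0 < δ) :
    ∃ k₀ : ℕ, ∀ k : ℕ, k₀ ≤ k → ∀ n t : ℕ,
      ∀ φ : (Fin k → ZMod 2) → (Fin n → ZMod 2), Function.Injective φ →
      (∀ x e : Fin k → ZMod 2, hammingNorm e = 1 → hammingNorm (φ (x + e) - φ x) ≤ t) →
      (t : ℝ) ≤ (1 - α) * Real.logb 2 k / Real.logb 2 ((1 - p) / p) →
      ∀ ψ : (Fin n → ZMod 2) → (Fin k → ZMod 2),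
        1 - δ ≤ (2 : ℝ) ^ (-(k : ℝ)) * ∑ x : Fin k → ZMod 2, ∑ e : Fin n → ZMod 2,
          bscProb p e * (if ψ (φ x + e) ≠ x then 1 else 0) := by
  refine ⟨max 1 (⌈(1/δ) ^ ((1:ℝ)/α)⌉₊ + 1), ?_⟩
  intro k hk n t φ hφ hupd ht ψ
  have hq : (0:ℝ) < 1 - p := by linarith
  have hγ0 : (0:ℝ) < p / (1 - p) := div_pos hp0 hq
  have hk1 : 1 ≤ k := le_trans (le_max_left _ _) hk
  have hkR : (1:ℝ) ≤ (k:ℝ) := by exact_mod_cast hk1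
  have hkpos : (0:ℝ) < (k:ℝ) := by linarith
  set S : (Fin k → ZMod 2) → ℝ := fun x =>
    ∑ y : Fin n → ZMod 2, bscProb p (y - φ x) * (if ψ y = x then 1 else 0) with hS
  have hSnn : ∀ x, 0 ≤ S x := fun x => Finset.sum_nonneg (fun y _ =>
    mul_nonneg (bscProb_nonneg hp0.le (by linarith) _) (by positivity))
  have hkey : ∀ x, S x + (p/(1-p))^t * ∑ i : Fin k, S (x + uvec i) ≤ 1 :=
    fun x => key hp0 hp1 φ hupd ψ x
  have hshift : ∀ c, ∑ x : Fin k → ZMod 2, S (x + c) = ∑ x, S x := by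
    intro c
    exact Fintype.sum_bijective (fun x => x + c) (Function.bijective_iff_has_inverse.mpr
      ⟨fun x => x - c, fun x => by simp, fun x => by simp⟩) _ _ (fun x => rfl)
  have hSsum : 0 ≤ ∑ x, S x := Finset.sum_nonneg (fun x _ => hSnn x)
  have h2 : (∑ x, S x) + (p/(1-p))^t * ((k:ℝ) * ∑ x, S x) ≤ 2^k := by
    have h := Finset.sum_le_sum (fun x (_ : x ∈ (Finset.univ : Finset (Fin k → ZMod 2))) => hkey x)
    have hL : ∑ x : Fin k → ZMod 2, (S x + (p/(1-p))^t * ∑ i : Fin k, S (x + uvec i))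
        = (∑ x, S x) + (p/(1-p))^t * ((k:ℝ) * ∑ x, S x) := by
      rw [Finset.sum_add_distrib, ← Finset.mul_sum]
      congr 2
      rw [Finset.sum_comm, Finset.sum_congr rfl (fun i (_ : i ∈ Finset.univ) => hshift (uvec i)),
        Finset.sum_const, Finset.card_univ, Fintype.card_fin, nsmul_eq_mul]
    have hR : ∑ _x : Fin k → ZMod 2, (1:ℝ) = 2^k := by
      rw [Finset.sum_const, Finset.card_univ, nsmul_eq_mul, mul_one]
      norm_num [Fintype.card_fun]
    rw [hL, hR] at h
    exact h
  -- numeric bound: k * γ^t ≥ k^α ≥ 1/δ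
  have hbase : (1:ℝ) < (1-p)/p := by
    rw [lt_div_iff₀ hp0]; linarith
  have hL0 : 0 < Real.logb 2 ((1-p)/p) := Real.logb_pos one_lt_two hbase
  have htL : (t:ℝ) * Real.logb 2 ((1-p)/p) ≤ (1-α) * Real.logb 2 k :=
    (le_div_iff₀ hL0).mp ht
  have hpow1 : ((1-p)/p)^t ≤ (k:ℝ) ^ (1-α) := by
    have e1 : ((1-p)/p)^t = (2:ℝ) ^ ((t:ℝ) * Real.logb 2 ((1-p)/p)) := by
      rw [mul_comm, Real.rpow_mul (by norm_num : (0:ℝ) ≤ 2),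
        Real.rpow_logb two_pos (by norm_num) (by positivity : (0:ℝ) < (1-p)/p),
        Real.rpow_natCast]
    have e2 : (k:ℝ) ^ (1-α) = (2:ℝ) ^ ((1-α) * Real.logb 2 k) := by
      rw [mul_comm (1-α) (Real.logb 2 (k:ℝ)), Real.rpow_mul (by norm_num : (0:ℝ) ≤ 2),
        Real.rpow_logb two_pos (by norm_num) hkpos]
    rw [e1, e2]
    exact Real.rpow_le_rpow_of_exponent_le one_le_two htL
  have hγt : (k:ℝ) ^ (α - 1) ≤ (p/(1-p))^t := by
    have hinv : (p/(1-p))^t = (((1-p)/p)^t)⁻¹ := by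
      rw [← inv_pow, inv_div]
    rw [hinv]
    have hk1α : 0 < (k:ℝ) ^ ((1:ℝ)-α) := Real.rpow_pos_of_pos hkpos _
    rw [show (α - 1 : ℝ) = -(1 - α) by ring, Real.rpow_neg hkpos.le]
    exact inv_anti₀ (by positivity) hpow1
  have hkγ : (k:ℝ) ^ α ≤ (k:ℝ) * (p/(1-p))^t := by
    have : (k:ℝ) * (k:ℝ) ^ (α - 1) = (k:ℝ) ^ α := by
      nth_rewrite 1 [show (k:ℝ) = (k:ℝ) ^ (1:ℝ) by rw [Real.rpow_one]]
      rw [← Real.rpow_add hkpos]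
      norm_num
    calc (k:ℝ) ^ α = (k:ℝ) * (k:ℝ) ^ (α - 1) := this.symm
      _ ≤ (k:ℝ) * (p/(1-p))^t := by
          apply mul_le_mul_of_nonneg_left hγt hkpos.le
  have hδk : 1/δ ≤ (k:ℝ) ^ α := by
    have hck : ((1/δ) ^ ((1:ℝ)/α) : ℝ) ≤ (k:ℝ) := by
      have h1 : (⌈(1/δ) ^ ((1:ℝ)/α)⌉₊ : ℝ) ≤ (k:ℝ) := by
        have : ⌈(1/δ) ^ ((1:ℝ)/α)⌉₊ ≤ k := by
          have := le_trans (le_max_right 1 (⌈(1/δ) ^ ((1:ℝ)/α)⌉₊ + 1)) hk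
          omega
        exact_mod_cast this
      exact le_trans (Nat.le_ceil _) h1
    calc (1/δ : ℝ) = ((1/δ) ^ ((1:ℝ)/α)) ^ α := by
          rw [← Real.rpow_mul (by positivity), one_div_mul_cancel hα0.ne', Real.rpow_one]
      _ ≤ (k:ℝ) ^ α := Real.rpow_le_rpow (by positivity) hck hα0.le
  -- conclude ∑ S ≤ δ * 2^k
  have hSbound : ∑ x, S x ≤ δ * 2^k := by
    have h3 : (1/δ) * ∑ x, S x ≤ 2^k := by
      have h4 : (1/δ) * ∑ x, S x ≤ ((k:ℝ) * (p/(1-p))^t) * ∑ x, S x :=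
        mul_le_mul_of_nonneg_right (le_trans hδk hkγ) hSsum
      nlinarith [hSsum, h2]
    rw [div_mul_eq_mul_div, one_mul, div_le_iff₀ hδ] at h3
    linarith [h3]
  -- rewrite goal
  have hEq : ∀ x, (∑ e : Fin n → ZMod 2, bscProb p e * (if ψ (φ x + e) ≠ x then 1 else 0))
      = 1 - S x := by
    intro x
    have h1 : (∑ e : Fin n → ZMod 2, bscProb p e * (if ψ (φ x + e) ≠ x then 1 else 0))
        = (∑ e : Fin n → ZMod 2, bscProb p e)
          - ∑ e : Fin n → ZMod 2, bscProb p e * (if ψ (φ x + e) = x then 1 else 0) := by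
      rw [← Finset.sum_sub_distrib]
      apply Finset.sum_congr rfl
      intro e _
      by_cases h : ψ (φ x + e) = x <;> simp [h]
    rw [h1, sum_bscProb]
    congr 1
    exact Fintype.sum_bijective (fun e => φ x + e) (Function.bijective_iff_has_inverse.mpr
      ⟨fun y => y - φ x, fun y => by simp, fun y => by simp⟩)
      (fun e => bscProb p e * (if ψ (φ x + e) = x then 1 else 0))
      (fun y => bscProb p (y - φ x) * (if ψ y = x then 1 else 0))
      (fun e => by simp)
  rw [Finset.sum_congr rfl (fun x (_ : x ∈ Finset.univ) => hEq x), Finset.sum_sub_distrib,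
    Finset.sum_const, Finset.card_univ, nsmul_eq_mul, mul_one]
  have hcard : (Fintype.card (Fin k → ZMod 2) : ℝ) = 2^k := by
    norm_num [Fintype.card_fun]
  rw [hcard]
  have hpow : (2:ℝ) ^ (-(k:ℝ)) = ((2:ℝ)^k)⁻¹ := by
    rw [Real.rpow_neg (by norm_num), Real.rpow_natCast]
  rw [hpow]
  have h2k : (0:ℝ) < 2^k := by positivity
  rw [mul_sub, inv_mul_cancel₀ h2k.ne']
  have : ((2:ℝ)^k)⁻¹ * ∑ x, S x ≤ δ := by
    rw [inv_mul_le_iff₀ h2k, mul_comm]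
    exact hSbound
  linarith
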